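/- Let q_1, ..., q_r be nonzero integers satisfying condition (*), and set v = 16 ∏_{ℓ | q_1⋯q_r, ℓ > 2} ℓ (product over odd primes dividing q_1⋯q_r). Then there exists an integer u coprime to v such that: (1) every prime p ≡ u (mod v) satisfies (q_1/p) = ⋯ = (q_r/p) = −1; and (2) if T is the largest power of 2 dividing u − 1, then T ∈ {2, 4, 8} and gcd((u−1)/T, v) = 1. -/

import Mathlib

open Finset ZMod
open scoped NumberTheorySymbols

/-- sign function ZMod 2 → {±1} -/
def eps (a : ZMod 2) : ℤ := if a = 0 then 1 else -1

lemma eps_add (a b : ZMod 2) : eps (a + b) = eps a * eps b := by revert a b; decide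

lemma eps_pow (n : ℕ) (a : ZMod 2) : eps a ^ n = eps ((n : ZMod 2) * a) := by
  induction n with
  | zero => simp [eps]
  | succ n ih =>
    rw [pow_succ, ih, Nat.cast_succ, add_mul, one_mul, eps_add]

lemma eps_sum {α : Type*} (s : Finset α) (f : α → ZMod 2) :
    eps (∑ x ∈ s, f x) = ∏ x ∈ s, eps (f x) := by
  classical
  induction s using Finset.induction with
  | empty => simp [eps]
  | insert _ _ h ih => rw [Finset.sum_insert h, Finset.prod_insert h, eps_add, ih]

/-- Exponent bookkeeping -/
def E0 (P' : Finset ℕ) (a : ℤ) : ℕ :=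
  (if a < 0 then 1 else 0) + ∑ ℓ ∈ P', a.natAbs.factorization ℓ * (ℓ / 2)

def E2 (a : ℤ) : ℕ := a.natAbs.factorization 2

def EL (a : ℤ) (ℓ : ℕ) : ℕ := a.natAbs.factorization ℓ

lemma E2_mul (a b : ℤ) (ha : a ≠ 0) (hb : b ≠ 0) : E2 (a * b) = E2 a + E2 b := by
  unfold E2
  rw [Int.natAbs_mul,
    Nat.factorization_mul (Int.natAbs_ne_zero.mpr ha) (Int.natAbs_ne_zero.mpr hb)]
  simp

lemma EL_mul (a b : ℤ) (ha : a ≠ 0) (hb : b ≠ 0) (ℓ : ℕ) :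
    EL (a * b) ℓ = EL a ℓ + EL b ℓ := by
  unfold EL
  rw [Int.natAbs_mul,
    Nat.factorization_mul (Int.natAbs_ne_zero.mpr ha) (Int.natAbs_ne_zero.mpr hb)]
  simp

lemma E0_mul (P' : Finset ℕ) (a b : ℤ) (ha : a ≠ 0) (hb : b ≠ 0) :
    ((E0 P' (a * b) : ℕ) : ZMod 2) = (E0 P' a : ZMod 2) + (E0 P' b : ZMod 2) := by
  unfold E0
  have hfac : ∀ ℓ : ℕ, (a * b).natAbs.factorization ℓ
      = a.natAbs.factorization ℓ + b.natAbs.factorization ℓ := by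
    intro ℓ
    rw [Int.natAbs_mul,
      Nat.factorization_mul (Int.natAbs_ne_zero.mpr ha) (Int.natAbs_ne_zero.mpr hb)]
    simp
  have hsum : ∑ ℓ ∈ P', (a * b).natAbs.factorization ℓ * (ℓ / 2)
      = ∑ ℓ ∈ P', a.natAbs.factorization ℓ * (ℓ / 2)
        + ∑ ℓ ∈ P', b.natAbs.factorization ℓ * (ℓ / 2) := by
    rw [← Finset.sum_add_distrib]
    exact Finset.sum_congr rfl fun ℓ _ => by rw [hfac ℓ, add_mul]
  have hsgn : ((if a * b < 0 then 1 else 0 : ℕ) : ZMod 2)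
      = ((if a < 0 then 1 else 0 : ℕ) : ZMod 2) + ((if b < 0 then 1 else 0 : ℕ) : ZMod 2) := by
    rcases ha.lt_or_gt with h1 | h1 <;> rcases hb.lt_or_gt with h2 | h2
    · rw [if_pos h1, if_pos h2, if_neg (not_lt.mpr (mul_pos_of_neg_of_neg h1 h2).le)]
      decide
    · rw [if_pos h1, if_neg (asymm h2), if_pos (mul_neg_of_neg_of_pos h1 h2)]
      decide
    · rw [if_neg (asymm h1), if_pos h2, if_pos (mul_neg_of_pos_of_neg h1 h2)]
      decide
    · rw [if_neg (asymm h1), if_neg (asymm h2), if_neg (not_lt.mpr (mul_pos h1 h2).le)]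
      decide
  rw [hsum]
  push_cast
  push_cast at hsgn
  rw [hsgn]
  ring

/-- the row of exponents attached to a nonzero integer, as a vector over 𝔽₂ -/
def rowf (P' : Finset ℕ) (a : ℤ) : Option (Option {x // x ∈ P'}) → ZMod 2 := fun k =>
  k.elim ((E0 P' a : ZMod 2)) fun k' =>
    k'.elim ((E2 a : ZMod 2)) fun ℓ => ((EL a ℓ.1 : ZMod 2))

lemma rowf_one (P' : Finset ℕ) (k : Option (Option {x // x ∈ P'})) : rowf P' 1 k = 0 := by
  rcases k with _ | (_ | ℓ) <;> simp [rowf, E0, E2, EL, Nat.factorization_one]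

lemma rowf_mul (P' : Finset ℕ) (a b : ℤ) (ha : a ≠ 0) (hb : b ≠ 0)
    (k : Option (Option {x // x ∈ P'})) :
    rowf P' (a * b) k = rowf P' a k + rowf P' b k := by
  rcases k with _ | (_ | ℓ)
  · exact E0_mul P' a b ha hb
  · show ((E2 (a*b) : ℕ) : ZMod 2) = _
    rw [E2_mul a b ha hb]; push_cast; rfl
  · show ((EL (a*b) ℓ.1 : ℕ) : ZMod 2) = _
    rw [EL_mul a b ha hb]; push_cast; rfl

lemma rowf_pow (P' : Finset ℕ) (a : ℤ) (ha : a ≠ 0) (n : ℕ)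
    (k : Option (Option {x // x ∈ P'})) :
    rowf P' (a ^ n) k = (n : ZMod 2) * rowf P' a k := by
  induction n with
  | zero => rw [pow_zero, rowf_one]; push_cast; ring
  | succ n ih =>
    rw [pow_succ, rowf_mul P' _ _ (pow_ne_zero n ha) ha, ih, Nat.cast_succ]; ring

lemma rowf_prod {α : Type*} (P' : Finset ℕ) (s : Finset α) (f : α → ℤ)
    (hf : ∀ x ∈ s, f x ≠ 0) (k : Option (Option {x // x ∈ P'})) :
    rowf P' (∏ x ∈ s, f x) k = ∑ x ∈ s, rowf P' (f x) k := by
  classical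
  induction s using Finset.induction with
  | empty => simpa using rowf_one P' k
  | @insert a s ha ih =>
    rw [Finset.prod_insert ha, Finset.sum_insert ha,
      rowf_mul P' _ _ (hf a (Finset.mem_insert_self a s))
        (Finset.prod_ne_zero_iff.mpr fun x hx => hf x (Finset.mem_insert_of_mem hx)),
      ih fun x hx => hf x (Finset.mem_insert_of_mem hx)]

lemma lemA (P' : Finset ℕ) (hP' : ∀ ℓ ∈ P', ℓ.Prime ∧ ℓ ≠ 2) (u : ℕ) (hu : Odd u) :
    ∀ n : ℕ, ∀ a : ℤ, a.natAbs = n → a ≠ 0 →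
      (∀ ℓ : ℕ, ℓ.Prime → ℓ ≠ 2 → (ℓ : ℤ) ∣ a → ℓ ∈ P') →
      J(a | u) = χ₄ (u : ZMod 4) ^ E0 P' a * χ₈ (u : ZMod 8) ^ E2 a
        * ∏ ℓ ∈ P', J((u : ℤ) | ℓ) ^ EL a ℓ := by
  intro n
  induction n using Nat.strong_induction_on with
  | _ n ih =>
    intro a han ha0 hfac
    rcases eq_or_ne a.natAbs 1 with h1 | h1
    · rcases Int.natAbs_eq_iff.mp h1 with rfl | rfl
      · simp [E0, E2, EL, Nat.factorization_one]
      · rw [show ((-(1:ℕ) : ℤ)) = -1 by norm_num] at *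
        rw [jacobiSym.at_neg_one hu]
        norm_num [E0, E2, EL, Nat.factorization_one]
    · have hna0 : a.natAbs ≠ 0 := Int.natAbs_ne_zero.mpr ha0
      set m := a.natAbs.minFac with hm_def
      have hm : m.Prime := Nat.minFac_prime h1
      have hmdvd : (m : ℤ) ∣ a :=
        Int.dvd_natAbs.mp (Int.natCast_dvd_natCast.mpr (Nat.minFac_dvd _))
      obtain ⟨b, hb⟩ := hmdvd
      have hm0 : (0 : ℤ) < (m : ℤ) := by exact_mod_cast hm.pos
      have hb0 : b ≠ 0 := by
        rintro rfl
        rw [mul_zero] at hb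
        exact ha0 hb
      have hnab : a.natAbs = m * b.natAbs := by rw [hb, Int.natAbs_mul, Int.natAbs_natCast]
      have hblt : b.natAbs < n := by
        rw [← han, hnab]
        have hb1 : 1 ≤ b.natAbs := Nat.one_le_iff_ne_zero.mpr (Int.natAbs_ne_zero.mpr hb0)
        exact (Nat.lt_mul_iff_one_lt_left
          (Nat.pos_of_ne_zero (Int.natAbs_ne_zero.mpr hb0))).mpr hm.one_lt
      have hbfac : ∀ ℓ : ℕ, ℓ.Prime → ℓ ≠ 2 → (ℓ : ℤ) ∣ b → ℓ ∈ P' := fun ℓ hp h2 hd =>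
        hfac ℓ hp h2 (hd.trans (Dvd.intro_left _ hb.symm))
      have IH := ih b.natAbs hblt b rfl hb0 hbfac
      have hE : ∀ ℓ : ℕ, a.natAbs.factorization ℓ
          = (if m = ℓ then 1 else 0) + b.natAbs.factorization ℓ := by
        intro ℓ
        rw [hnab, Nat.factorization_mul hm.ne_zero (Int.natAbs_ne_zero.mpr hb0),
          Nat.Prime.factorization hm]
        simp [Finsupp.single_apply]
      have hsign : a < 0 ↔ b < 0 := by
        rw [hb]
        constructor
        · intro h
          by_contra h'
          push_neg at h'
          exact absurd (mul_nonneg hm0.le h') (not_le.mpr h)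
        · exact fun h => mul_neg_of_pos_of_neg hm0 h
      by_cases hm2 : m = 2
      · -- even prime factor
        have hE0 : E0 P' a = E0 P' b := by
          unfold E0
          rw [if_congr hsign rfl rfl]
          congr 1
          refine Finset.sum_congr rfl fun ℓ hℓ => ?_
          rw [hE ℓ, if_neg (fun he => (hP' ℓ hℓ).2 (by omega)), zero_add]
        have hE2 : E2 a = 1 + E2 b := by unfold E2; rw [hE 2, if_pos hm2]
        have hprod : ∏ ℓ ∈ P', J((u:ℤ) | ℓ) ^ EL a ℓ = ∏ ℓ ∈ P', J((u:ℤ) | ℓ) ^ EL b ℓ := by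
          refine Finset.prod_congr rfl fun ℓ hℓ => ?_
          unfold EL
          rw [hE ℓ, if_neg (fun he => (hP' ℓ hℓ).2 (by omega)), zero_add]
        rw [hE0, hE2, hprod, hb, hm2]
        rw [show (((2:ℕ) : ℤ)) = 2 by norm_num]
        rw [jacobiSym.mul_left, jacobiSym.at_two hu, IH, pow_add, pow_one]
        ring
      · -- odd prime factor
        have hmP' : m ∈ P' := hfac m hm hm2 ⟨b, hb⟩
        have hE0 : E0 P' a = m / 2 + E0 P' b := by
          unfold E0
          rw [if_congr hsign rfl rfl]
          have : ∑ ℓ ∈ P', a.natAbs.factorization ℓ * (ℓ / 2)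
              = ∑ ℓ ∈ P', ((if m = ℓ then ℓ / 2 else 0) + b.natAbs.factorization ℓ * (ℓ / 2)) :=
            Finset.sum_congr rfl fun ℓ _ => by
              rw [hE ℓ, add_mul, ite_mul, one_mul, zero_mul]
          rw [this, Finset.sum_add_distrib, Finset.sum_ite_eq, if_pos hmP']
          ring
        have hE2 : E2 a = E2 b := by unfold E2; rw [hE 2, if_neg hm2, zero_add]
        have hprod : ∏ ℓ ∈ P', J((u:ℤ) | ℓ) ^ EL a ℓ
            = J((u:ℤ) | m) * ∏ ℓ ∈ P', J((u:ℤ) | ℓ) ^ EL b ℓ := by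
          have h1 : ∏ ℓ ∈ P', J((u:ℤ) | ℓ) ^ EL a ℓ
              = ∏ ℓ ∈ P', ((if m = ℓ then J((u:ℤ) | ℓ) else 1) * J((u:ℤ) | ℓ) ^ EL b ℓ) := by
            refine Finset.prod_congr rfl fun ℓ _ => ?_
            unfold EL
            rw [hE ℓ, pow_add, pow_ite, pow_one, pow_zero]
          rw [h1, Finset.prod_mul_distrib, Finset.prod_ite_eq, if_pos hmP']
        have hmo : Odd m := hm.odd_of_ne_two hm2
        have hrec : J((m:ℤ) | u) = χ₄ (u : ZMod 4) ^ (m / 2) * J((u:ℤ) | m) := by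
          rw [jacobiSym.quadratic_reciprocity hmo hu, mul_comm (m/2) (u/2), pow_mul,
            ← ZMod.χ₄_eq_neg_one_pow (Nat.odd_iff.mp hu)]
        rw [hE0, hE2, hprod, hb, jacobiSym.mul_left, hrec, IH, pow_add]
        ring

lemma lemB (P' : Finset ℕ) (a : ℤ) (ha0 : a ≠ 0)
    (hfac : ∀ ℓ : ℕ, ℓ.Prime → ℓ ≠ 2 → (ℓ : ℤ) ∣ a → ℓ ∈ P')
    (h0 : Even (E0 P' a)) (h2 : Even (E2 a)) (hL : ∀ ℓ ∈ P', Even (EL a ℓ)) :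
    IsSquare a := by
  have hall : ∀ p : ℕ, Even (a.natAbs.factorization p) := by
    intro p
    by_cases hp : p.Prime
    · by_cases hdvd : p ∣ a.natAbs
      · rcases eq_or_ne p 2 with rfl | hp2
        · exact h2
        · exact hL p (hfac p hp hp2 (Int.dvd_natAbs.mp (Int.natCast_dvd_natCast.mpr hdvd)))
      · rw [Nat.factorization_eq_zero_of_not_dvd hdvd]; exact Even.zero
    · rw [Nat.factorization_eq_zero_of_not_prime _ hp]; exact Even.zero
  have hna : a.natAbs ≠ 0 := Int.natAbs_ne_zero.mpr ha0
  have hsq : IsSquare a.natAbs := by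
    refine ⟨a.natAbs.factorization.prod fun p e => p ^ (e / 2), ?_⟩
    conv_lhs => rw [← Nat.factorization_prod_pow_eq_self hna]
    rw [Finsupp.prod, Finsupp.prod, ← Finset.prod_mul_distrib]
    refine Finset.prod_congr rfl fun p hp => ?_
    rw [← pow_add]
    congr 1
    obtain ⟨k, hk⟩ := hall p
    omega
  have hpos : 0 ≤ a := by
    by_contra hneg
    push_neg at hneg
    have hS : Even (∑ ℓ ∈ P', a.natAbs.factorization ℓ * (ℓ / 2)) :=
      Finset.even_sum _ fun ℓ _ => (hall ℓ).mul_right _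
    unfold E0 at h0
    rw [if_pos hneg] at h0
    rcases hS with ⟨k, hk⟩
    rcases h0 with ⟨j, hj⟩
    omega
  obtain ⟨r, hr⟩ := hsq
  exact ⟨(r : ℤ), by rw [← Int.natAbs_of_nonneg hpos, hr]; push_cast; ring⟩

lemma solveLin {ι κ : Type} [Fintype ι] [Fintype κ] [DecidableEq ι] [DecidableEq κ]
    (M : ι → κ → ZMod 2) (b : ι → ZMod 2)
    (H : ∀ c : ι → ZMod 2, (∀ k, ∑ i, c i * M i k = 0) → ∑ i, c i * b i = 0) :
    ∃ t : κ → ZMod 2, ∀ i, ∑ k, M i k * t k = b i := by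
  by_contra hs
  push_neg at hs
  set A : (κ → ZMod 2) →ₗ[ZMod 2] (ι → ZMod 2) := Matrix.mulVecLin (Matrix.of M) with hA
  have hAapp : ∀ t : κ → ZMod 2, ∀ i, A t i = ∑ k, M i k * t k := by
    intro t i
    simp [hA, Matrix.mulVecLin_apply, Matrix.mulVec, dotProduct]
  set R := LinearMap.range A with hR
  have hbR : b ∉ R := by
    rintro ⟨t, ht⟩
    obtain ⟨i, hi⟩ := hs t
    exact hi (by rw [← hAapp t i, ht])
  have hq : R.mkQ b ≠ 0 := by
    intro h
    rw [Submodule.mkQ_apply, Submodule.Quotient.mk_eq_zero] at h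
    exact hbR h
  obtain ⟨g, hg⟩ : ∃ g : Module.Dual (ZMod 2) ((ι → ZMod 2) ⧸ R), g (R.mkQ b) ≠ 0 := by
    by_contra h
    push_neg at h
    exact hq ((Module.forall_dual_apply_eq_zero_iff (ZMod 2) _).mp h)
  set c : ι → ZMod 2 := fun i => g (R.mkQ fun j => if i = j then 1 else 0) with hc
  have key : ∀ y : ι → ZMod 2, g (R.mkQ y) = ∑ i, y i * c i := by
    intro y
    conv_lhs => rw [pi_eq_sum_univ y]
    rw [map_sum, map_sum]
    exact Finset.sum_congr rfl fun i _ => by rw [_root_.map_smul, _root_.map_smul, smul_eq_mul]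
  have hck : ∀ k, ∑ i, c i * M i k = 0 := by
    intro k
    have h1 : A (fun j => if k = j then 1 else 0) ∈ R := ⟨_, rfl⟩
    have h2 : g (R.mkQ (A fun j => if k = j then 1 else 0)) = 0 := by
      rw [Submodule.mkQ_apply, (Submodule.Quotient.mk_eq_zero R).mpr h1, map_zero]
    rw [key] at h2
    calc ∑ i, c i * M i k
        = ∑ i, (A fun j => if k = j then 1 else 0) i * c i := by
          refine Finset.sum_congr rfl fun i _ => ?_
          rw [mul_comm]
          congr 1
          rw [hAapp]
          simp
      _ = 0 := h2
  have hfin : g (R.mkQ b) = 0 := by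
    rw [key]
    simpa [mul_comm] using H c hck
  exact hg hfin

lemma crt2 (m n b₁ b₂ : ℤ) (h : IsCoprime m n) :
    ∃ U : ℤ, U ≡ b₁ [ZMOD m] ∧ U ≡ b₂ [ZMOD n] := by
  obtain ⟨x, y, hxy⟩ := h
  refine ⟨b₁ * (y * n) + b₂ * (x * m), ?_, ?_⟩
  · have : m ∣ b₁ - (b₁ * (y * n) + b₂ * (x * m)) :=
      ⟨x * (b₁ - b₂), by linear_combination -b₁ * hxy⟩
    exact Int.modEq_iff_dvd.mpr this
  · have : n ∣ b₂ - (b₁ * (y * n) + b₂ * (x * m)) :=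
      ⟨y * (b₂ - b₁), by linear_combination -b₂ * hxy⟩
    exact Int.modEq_iff_dvd.mpr this

lemma crtAll (S : Finset ℕ) (hS : ∀ ℓ ∈ S, ℓ.Prime ∧ ℓ ≠ 2) (x : ℤ) (y : ℕ → ℤ) :
    ∃ U : ℤ, U ≡ x [ZMOD (16 : ℤ)] ∧ ∀ ℓ ∈ S, U ≡ y ℓ [ZMOD (ℓ : ℤ)] := by
  classical
  induction S using Finset.induction with
  | empty => exact ⟨x, Int.ModEq.refl x, by simp⟩
  | @insert a S ha ih =>
    obtain ⟨U₀, h16, hS'⟩ := ih fun ℓ hℓ => hS ℓ (Finset.mem_insert_of_mem hℓ)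
    obtain ⟨hap, ha2⟩ := hS a (Finset.mem_insert_self a S)
    have hcopnat : Nat.Coprime a (16 * ∏ ℓ ∈ S, ℓ) := by
      refine Nat.Coprime.mul_right ?_ ?_
      · refine (Nat.Prime.coprime_iff_not_dvd hap).mpr fun hdvd => ?_
        rw [show (16:ℕ) = 2 ^ 4 by norm_num] at hdvd
        have : a ∣ 2 := hap.dvd_of_dvd_pow hdvd
        exact ha2 ((Nat.prime_dvd_prime_iff_eq hap Nat.prime_two).mp this)
      · refine (Nat.Prime.coprime_iff_not_dvd hap).mpr fun hdvd => ?_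
        obtain ⟨ℓ, hℓS, hdl⟩ := (Nat.Prime.prime hap).exists_mem_finset_dvd hdvd
        have : a = ℓ := (Nat.prime_dvd_prime_iff_eq hap (hS ℓ (Finset.mem_insert_of_mem hℓS)).1).mp hdl
        exact ha (this ▸ hℓS)
    have hcop : IsCoprime ((16 * ∏ ℓ ∈ S, ℓ : ℕ) : ℤ) (a : ℤ) :=
      Nat.isCoprime_iff_coprime.mpr hcopnat.symm
    obtain ⟨U, hU1, hU2⟩ := crt2 _ _ U₀ (y a) hcop
    have hdvd16 : (16 : ℤ) ∣ ((16 * ∏ ℓ ∈ S, ℓ : ℕ) : ℤ) := by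
      push_cast
      exact Dvd.intro _ rfl
    refine ⟨U, (hU1.of_dvd hdvd16).trans h16, ?_⟩
    intro ℓ hℓ
    rcases Finset.mem_insert.mp hℓ with rfl | hℓS
    · exact hU2
    · have hdvd : ((ℓ : ℕ) : ℤ) ∣ ((16 * ∏ ℓ ∈ S, ℓ : ℕ) : ℤ) := by
        exact_mod_cast Int.natCast_dvd_natCast.mpr ((Finset.dvd_prod_of_mem _ hℓS).mul_left 16)
      exact (hU1.of_dvd hdvd).trans (hS' ℓ hℓS)

lemma choose_y (ℓ : ℕ) (hl : ℓ.Prime) (hl2 : ℓ ≠ 2) (s : ZMod 2) (hs : s = 0 → ℓ ≠ 3) :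
    ∃ y : ℤ, J(y | ℓ) = eps s ∧ ¬y ≡ 0 [ZMOD (ℓ : ℤ)] ∧ ¬y ≡ 1 [ZMOD (ℓ : ℤ)] := by
  haveI : Fact ℓ.Prime := ⟨hl⟩
  have hmodeq : ∀ y z : ℤ, y ≡ z [ZMOD (ℓ : ℤ)] ↔ (y : ZMod ℓ) = (z : ZMod ℓ) := by
    intro y z
    exact (ZMod.intCast_eq_intCast_iff y z ℓ).symm
  by_cases h0 : s = 0
  · have hl3 : ℓ ≠ 3 := hs h0
    refine ⟨4, ?_, ?_, ?_⟩
    · have hgcd : Int.gcd 2 ℓ = 1 := by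
        have : Nat.Coprime 2 ℓ := (Nat.Prime.coprime_iff_not_dvd Nat.prime_two).mpr fun hdvd =>
          hl2 ((Nat.prime_dvd_prime_iff_eq Nat.prime_two hl).mp hdvd).symm
        simpa [Int.gcd] using this
      have : J((2 : ℤ) ^ 2 | ℓ) = 1 := jacobiSym.sq_one' hgcd
      rw [h0]
      simpa [eps] using this
    · rw [hmodeq]
      intro h
      have : (ℓ : ℤ) ∣ 4 := by
        rwa [Int.cast_zero, ZMod.intCast_zmod_eq_zero_iff_dvd] at h
      have h4 : ℓ ∣ 4 := by exact_mod_cast this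
      rw [show (4:ℕ) = 2 ^ 2 by norm_num] at h4
      have : ℓ ∣ 2 := hl.dvd_of_dvd_pow h4
      exact hl2 ((Nat.prime_dvd_prime_iff_eq hl Nat.prime_two).mp this)
    · rw [hmodeq]
      intro h
      have : (ℓ : ℤ) ∣ 4 - 1 := by
        rw [← sub_eq_zero] at h
        rwa [← Int.cast_sub, ZMod.intCast_zmod_eq_zero_iff_dvd] at h
      have h3 : ℓ ∣ 3 := by exact_mod_cast (by norm_num : (4 - 1 : ℤ) = 3) ▸ this
      exact hl3 ((Nat.prime_dvd_prime_iff_eq hl (by norm_num)).mp h3)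
  · obtain ⟨a, ha⟩ := FiniteField.exists_nonsquare
      (F := ZMod ℓ) (by rwa [ZMod.ringChar_zmod_n])
    have hcast : (((a.val : ℤ)) : ZMod ℓ) = a := by
      push_cast
      simp [ZMod.natCast_val, ZMod.cast_id]
    refine ⟨(a.val : ℤ), ?_, ?_, ?_⟩
    · have : J((a.val : ℤ) | ℓ) = -1 :=
        (ZMod.nonsquare_iff_jacobiSym_eq_neg_one).mpr (by rwa [hcast])
      rw [this, eps, if_neg h0]
    · rw [hmodeq, hcast]
      intro h
      exact ha (by rw [h, Int.cast_zero]; exact ⟨0, by ring⟩)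
    · rw [hmodeq, hcast]
      intro h
      exact ha (by rw [h, Int.cast_one]; exact ⟨1, by ring⟩)
lemma even_of_cast2 {n : ℕ} (h : ((n : ℕ) : ZMod 2) = 0) : Even n := by
  rcases (ZMod.natCast_eq_zero_iff _ 2).mp h with ⟨k, hk⟩
  exact ⟨k, by omega⟩

lemma choose_x16 (t0 t1 : ZMod 2) :
    ∃ x16 : ℕ, x16 % 2 = 1 ∧ χ₄ ((x16 : ℕ) : ZMod 4) = eps t0 ∧ χ₈ ((x16 : ℕ) : ZMod 8) = eps t1 ∧
      ∃ T : ℤ, (T = 2 ∨ T = 4 ∨ T = 8) ∧ T ∣ (x16 : ℤ) - 1 ∧ ¬(2 * T ∣ (x16 : ℤ) - 1)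
        ∧ 2 * T ∣ 16 := by
  have h2 : ∀ a : ZMod 2, a = 0 ∨ a = 1 := by decide
  rcases h2 t0 with rfl | rfl <;> rcases h2 t1 with rfl | rfl
  · exact ⟨9, by norm_num, by decide, by decide,
      8, by norm_num, by norm_num, by norm_num, by norm_num⟩
  · exact ⟨5, by norm_num, by decide, by decide,
      4, by norm_num, by norm_num, by norm_num, by norm_num⟩
  · exact ⟨7, by norm_num, by decide, by decide,
      2, by norm_num, by norm_num, by norm_num, by norm_num⟩
  · exact ⟨3, by norm_num, by decide, by decide,
      2, by norm_num, by norm_num, by norm_num, by norm_num⟩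

/-- Condition (*) for nonzero integers `q 0, ..., q (r-1)`: whenever `e₀, e₁, ..., e_r` are
nonnegative integers such that `(-3)^e₀ * q₁^e₁ ⋯ q_r^e_r` is a perfect square, the sum
`e₀ + e₁ + ⋯ + e_r` is even. -/
def StarCondition {r : ℕ} (q : Fin r → ℤ) : Prop :=
  ∀ (e₀ : ℕ) (e : Fin r → ℕ),
    IsSquare ((-3 : ℤ) ^ e₀ * ∏ i, (q i) ^ (e i)) → Even (e₀ + ∑ i, e i)

theorem stmt4 {r : ℕ} (q : Fin r → ℤ) (hq : ∀ i, q i ≠ 0)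
    (hstar : StarCondition q)
    (v : ℕ)
    (hv : v = 16 * ∏ ℓ ∈ (∏ i, q i).natAbs.primeFactors.filter (fun ℓ => ℓ ≠ 2), ℓ) :
    ∃ u : ℤ, IsCoprime u (v : ℤ) ∧
      (∀ p : ℕ, ∀ _ : Fact p.Prime, (p : ℤ) ≡ u [ZMOD (v : ℤ)] →
        ∀ i, legendreSym p (q i) = -1) ∧
      (∃ T : ℤ, (T = 2 ∨ T = 4 ∨ T = 8) ∧ T ∣ u - 1 ∧ ¬ (2 * T ∣ u - 1) ∧
        IsCoprime ((u - 1) / T) (v : ℤ)) := by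
  classical
  have hQ0 : (∏ i, q i) ≠ 0 := Finset.prod_ne_zero_iff.mpr fun i _ => hq i
  set P : Finset ℕ := (∏ i, q i).natAbs.primeFactors.filter (fun ℓ => ℓ ≠ 2) with hPdef
  set P' : Finset ℕ := insert 3 P with hP'def
  have h3P' : (3 : ℕ) ∈ P' := Finset.mem_insert_self 3 P
  have hP' : ∀ ℓ ∈ P', ℓ.Prime ∧ ℓ ≠ 2 := by
    intro ℓ hℓ
    rcases Finset.mem_insert.mp hℓ with rfl | hℓ
    · exact ⟨by norm_num, by norm_num⟩
    · obtain ⟨hmem, hne⟩ := Finset.mem_filter.mp hℓ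
      exact ⟨Nat.prime_of_mem_primeFactors hmem, hne⟩
  have hmemP : ∀ ℓ : ℕ, ℓ.Prime → ℓ ≠ 2 → (ℓ : ℤ) ∣ (∏ i, q i) → ℓ ∈ P := by
    intro ℓ hp h2 hdvd
    refine Finset.mem_filter.mpr
      ⟨Nat.mem_primeFactors.mpr ⟨hp, ?_, Int.natAbs_ne_zero.mpr hQ0⟩, h2⟩
    exact Int.natCast_dvd_natCast.mp (Int.dvd_natAbs.mpr hdvd)
  have hfacq : ∀ i, ∀ ℓ : ℕ, ℓ.Prime → ℓ ≠ 2 → (ℓ : ℤ) ∣ q i → ℓ ∈ P' := by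
    intro i ℓ hp h2 hdvd
    exact Finset.mem_insert_of_mem
      (hmemP ℓ hp h2 (hdvd.trans (Finset.dvd_prod_of_mem q (Finset.mem_univ i))))
  have hfac3 : ∀ ℓ : ℕ, ℓ.Prime → ℓ ≠ 2 → (ℓ : ℤ) ∣ (-3 : ℤ) → ℓ ∈ P' := by
    intro ℓ hp h2 hdvd
    have h3 : (ℓ : ℤ) ∣ (3 : ℤ) := (dvd_neg (α := ℤ)).mp (by simpa using hdvd)
    have h3' : ℓ ∣ 3 := by exact_mod_cast h3
    have : ℓ = 3 := (Nat.prime_dvd_prime_iff_eq hp (by norm_num)).mp h3'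
    exact this ▸ h3P'
  set QQ : Option (Fin r) → ℤ := fun o => o.elim (-3) q with hQQ
  have hQQ0 : ∀ o, QQ o ≠ 0 := by
    rintro (_ | i)
    · norm_num [hQQ]
    · exact hq i
  have hQQfac : ∀ o, ∀ ℓ : ℕ, ℓ.Prime → ℓ ≠ 2 → (ℓ : ℤ) ∣ QQ o → ℓ ∈ P' := by
    rintro (_ | i)
    · exact hfac3
    · exact hfacq i
  -- solve the linear system over 𝔽₂
  obtain ⟨t, ht⟩ := solveLin (ι := Option (Fin r)) (κ := Option (Option {x // x ∈ P'}))
      (fun o k => rowf P' (QQ o) k) (fun _ => 1) (by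
    intro c hc
    set e₀ : ℕ := (c none).val with he₀
    set e : Fin r → ℕ := fun i => (c (some i)).val with he
    have hcast : ∀ o : Option (Fin r), (((c o).val : ℕ) : ZMod 2) = c o := fun o => by
      have hval : ∀ a : ZMod 2, ((a.val : ℕ) : ZMod 2) = a := by decide
      exact hval (c o)
    set N : ℤ := (-3) ^ e₀ * ∏ i, q i ^ e i with hN
    have hprodne : (∏ i, q i ^ e i) ≠ 0 :=
      Finset.prod_ne_zero_iff.mpr fun i _ => pow_ne_zero _ (hq i)
    have hN0 : N ≠ 0 := mul_ne_zero (pow_ne_zero _ (by norm_num)) hprodne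
    have hrowN : ∀ k, rowf P' N k = ∑ o, c o * rowf P' (QQ o) k := by
      intro k
      rw [hN, rowf_mul P' _ _ (pow_ne_zero _ (by norm_num)) hprodne,
        rowf_pow P' _ (by norm_num) e₀ k,
        rowf_prod P' _ _ (fun i _ => pow_ne_zero _ (hq i)) k, Fintype.sum_option]
      congr 1
      · rw [he₀, hcast none]; rfl
      · refine Finset.sum_congr rfl fun i _ => ?_
        rw [rowf_pow P' _ (hq i), he, hcast (some i)]; rfl
    have heven : ∀ k, rowf P' N k = 0 := fun k => by rw [hrowN k]; exact hc k
    have hNfac : ∀ ℓ : ℕ, ℓ.Prime → ℓ ≠ 2 → (ℓ : ℤ) ∣ N → ℓ ∈ P' := by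
      intro ℓ hp h2 hdvd
      have hpz : Prime (ℓ : ℤ) := Nat.prime_iff_prime_int.mp hp
      rcases (Prime.dvd_mul hpz).mp hdvd with h | h
      · exact hfac3 ℓ hp h2 (hpz.dvd_of_dvd_pow h)
      · obtain ⟨i, _, hi⟩ := hpz.exists_mem_finset_dvd h
        exact hfacq i ℓ hp h2 (hpz.dvd_of_dvd_pow hi)
    have hNsq : IsSquare N := by
      refine lemB P' N hN0 hNfac ?_ ?_ ?_
      · exact even_of_cast2 (heven none)
      · exact even_of_cast2 (heven (some none))
      · intro ℓ hℓ
        exact even_of_cast2 (heven (some (some ⟨ℓ, hℓ⟩)))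
    have hstarN := hstar e₀ e hNsq
    have hsum : ∑ o : Option (Fin r), c o * 1 = ((e₀ + ∑ i, e i : ℕ) : ZMod 2) := by
      simp only [mul_one]
      rw [Fintype.sum_option]
      push_cast
      simp only [he₀, he, hcast]
    rw [hsum]
    rcases hstarN with ⟨k, hk⟩
    rw [hk]
    exact (ZMod.natCast_eq_zero_iff _ 2).mpr ⟨k, by omega⟩)
  -- t₃ = 1
  have ht3 : t (some (some ⟨3, h3P'⟩)) = 1 := by
    have h := ht none
    rw [Fintype.sum_option, Fintype.sum_option] at h
    have hna3 : ((-3 : ℤ)).natAbs = 3 := by norm_num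
    have e0v : rowf P' (QQ none) none = 0 := by
      show ((E0 P' (-3) : ℕ) : ZMod 2) = 0
      have hval : E0 P' (-3) = 2 := by
        unfold E0
        rw [if_pos (by norm_num : (-3 : ℤ) < 0), hna3,
          Nat.Prime.factorization (by norm_num : Nat.Prime 3)]
        have hrw : ∑ ℓ ∈ P', (Finsupp.single 3 1) ℓ * (ℓ / 2)
            = ∑ ℓ ∈ P', (if 3 = ℓ then ℓ / 2 else 0) :=
          Finset.sum_congr rfl fun ℓ _ => by
            rw [Finsupp.single_apply, ite_mul, one_mul, zero_mul]
        rw [hrw, Finset.sum_ite_eq, if_pos h3P']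
      rw [hval]; decide
    have e2v : rowf P' (QQ none) (some none) = 0 := by
      show ((E2 (-3) : ℕ) : ZMod 2) = 0
      have hval : E2 (-3) = 0 := by
        unfold E2
        rw [hna3, Nat.Prime.factorization (by norm_num : Nat.Prime 3),
          Finsupp.single_apply, if_neg (by norm_num)]
      rw [hval]; rfl
    have eLv : ∀ ℓ : {x // x ∈ P'}, rowf P' (QQ none) (some (some ℓ))
        = if (⟨3, h3P'⟩ : {x // x ∈ P'}) = ℓ then 1 else 0 := by
      intro ℓ
      show ((EL (-3) ℓ.1 : ℕ) : ZMod 2) = _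
      unfold EL
      rw [hna3, Nat.Prime.factorization (by norm_num : Nat.Prime 3), Finsupp.single_apply]
      by_cases he : (3 : ℕ) = ℓ.1
      · rw [if_pos he, if_pos (Subtype.ext he.symm).symm]
        exact Nat.cast_one
      · rw [if_neg he, if_neg fun hcc => he (congrArg Subtype.val hcc.symm).symm]
        exact Nat.cast_zero
    rw [e0v, e2v] at h
    simp only [eLv, ite_mul, one_mul, zero_mul] at h
    simp only [Finset.sum_ite_eq, Finset.mem_univ, if_true] at h
    simpa using h
  -- choose the residues
  have hy : ∀ ℓ : ℕ, ∃ y : ℤ, ∀ hℓ : ℓ ∈ P',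
      J(y | ℓ) = eps (t (some (some ⟨ℓ, hℓ⟩))) ∧ ¬y ≡ 0 [ZMOD (ℓ : ℤ)]
        ∧ ¬y ≡ 1 [ZMOD (ℓ : ℤ)] := by
    intro ℓ
    by_cases hℓ : ℓ ∈ P'
    · obtain ⟨hlp, hl2⟩ := hP' ℓ hℓ
      obtain ⟨y, h1, h2, h3⟩ := choose_y ℓ hlp hl2 (t (some (some ⟨ℓ, hℓ⟩))) (by
        intro hz h3eq
        subst h3eq
        rw [show (⟨3, hℓ⟩ : {x // x ∈ P'}) = ⟨3, h3P'⟩ from rfl, ht3] at hz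
        exact one_ne_zero hz)
      exact ⟨y, fun _ => ⟨h1, h2, h3⟩⟩
    · exact ⟨0, fun h => absurd h hℓ⟩
  choose y hyP using hy
  obtain ⟨x16, hx16odd, hχ₄, hχ₈, T, hTval, hTdvd, hTndvd, hT16⟩ :=
    choose_x16 (t none) (t (some none))
  obtain ⟨U, hU16, hUy⟩ := crtAll P' hP' (x16 : ℤ) y
  -- basic facts about U
  have hUodd : ¬(2 : ℤ) ∣ U := by
    intro h2U
    have hmod : U ≡ (x16 : ℤ) [ZMOD (2 : ℤ)] := hU16.of_dvd (by norm_num)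
    have h0 : U ≡ 0 [ZMOD (2 : ℤ)] := Int.modEq_zero_iff_dvd.mpr h2U
    have hdx : (2 : ℤ) ∣ (x16 : ℤ) := Int.modEq_zero_iff_dvd.mp (hmod.symm.trans h0)
    have hdx' : (2 : ℕ) ∣ x16 := by exact_mod_cast hdx
    omega
  have hvZ : (v : ℤ) = 16 * ∏ ℓ ∈ P, (ℓ : ℤ) := by
    rw [hv]
    push_cast
    ring
  have hcopP : ∀ ℓ ∈ P, ∀ w : ℤ, ¬(ℓ : ℤ) ∣ w → IsCoprime w ((ℓ : ℕ) : ℤ) := by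
    intro ℓ hℓ w hw
    exact ((Nat.prime_iff_prime_int.mp
      (hP' ℓ (Finset.mem_insert_of_mem hℓ)).1).coprime_iff_not_dvd.mpr hw).symm
  have hcop2 : ∀ w : ℤ, ¬(2 : ℤ) ∣ w → IsCoprime w (16 : ℤ) := by
    intro w hw
    have h2 : IsCoprime w (2 : ℤ) := (Int.prime_two.coprime_iff_not_dvd.mpr hw).symm
    have h4 := h2.pow_right (n := 4)
    rwa [show ((2 : ℤ)) ^ 4 = 16 by norm_num] at h4
  have hcopv : ∀ w : ℤ, ¬(2 : ℤ) ∣ w → (∀ ℓ ∈ P, ¬(ℓ : ℤ) ∣ w) → IsCoprime w (v : ℤ) := by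
    intro w h2 hPd
    rw [hvZ]
    exact (hcop2 w h2).mul_right (IsCoprime.prod_right fun ℓ hℓ => hcopP ℓ hℓ w (hPd ℓ hℓ))
  have hUℓ : ∀ ℓ ∈ P, ¬(ℓ : ℤ) ∣ U := by
    intro ℓ hℓ h
    have hℓ' : ℓ ∈ P' := Finset.mem_insert_of_mem hℓ
    obtain ⟨-, hy0, -⟩ := hyP ℓ hℓ'
    have h0 : U ≡ 0 [ZMOD (ℓ : ℤ)] := Int.modEq_zero_iff_dvd.mpr h
    exact hy0 ((hUy ℓ hℓ').symm.trans h0)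
  refine ⟨U, hcopv U hUodd hUℓ, ?_, ?_⟩
  · -- all Legendre symbols are -1
    intro p hp hmodv i
    have hppr := hp.out
    have hp2 : p ≠ 2 := by
      rintro rfl
      have h2v : (2 : ℤ) ∣ (v : ℤ) := by
        rw [hvZ]
        exact ⟨8 * ∏ ℓ ∈ P, (ℓ : ℤ), by ring⟩
      have h2U : (2 : ℤ) ∣ U := by
        have h0 : ((2:ℕ) : ℤ) ≡ U [ZMOD 2] := hmodv.of_dvd h2v
        have h00 : (0 : ℤ) ≡ U [ZMOD 2] :=
          (Int.modEq_zero_iff_dvd.mpr (by norm_num)).symm.trans h0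
        exact Int.modEq_zero_iff_dvd.mp h00.symm
      exact hUodd h2U
    have hpodd : Odd p := hppr.odd_of_ne_two hp2
    have h16v : (16 : ℤ) ∣ (v : ℤ) := by
      rw [hvZ]
      exact Dvd.intro _ rfl
    have hp16 : (p : ℤ) ≡ (x16 : ℤ) [ZMOD (16 : ℤ)] := (hmodv.of_dvd h16v).trans hU16
    have hχ₄p : χ₄ ((p : ℕ) : ZMod 4) = eps (t none) := by
      rw [← hχ₄]
      have h4 : (p : ℤ) ≡ (x16 : ℤ) [ZMOD (4 : ℤ)] := hp16.of_dvd (by norm_num)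
      have hcast4 : ((p : ℤ) : ZMod 4) = ((x16 : ℤ) : ZMod 4) :=
        (ZMod.intCast_eq_intCast_iff _ _ _).mpr h4
      exact congrArg χ₄ (by push_cast at hcast4; exact_mod_cast hcast4)
    have hχ₈p : χ₈ ((p : ℕ) : ZMod 8) = eps (t (some none)) := by
      rw [← hχ₈]
      have h8 : (p : ℤ) ≡ (x16 : ℤ) [ZMOD (8 : ℤ)] := hp16.of_dvd (by norm_num)
      have hcast8 : ((p : ℤ) : ZMod 8) = ((x16 : ℤ) : ZMod 8) :=
        (ZMod.intCast_eq_intCast_iff _ _ _).mpr h8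
      exact congrArg χ₈ (by push_cast at hcast8; exact_mod_cast hcast8)
    have hJp : ∀ ℓ : {x // x ∈ P'}, J((p : ℤ) | ℓ.1) ^ EL (q i) ℓ.1
        = eps (((EL (q i) ℓ.1 : ℕ) : ZMod 2) * t (some (some ℓ))) := by
      intro ℓ
      by_cases hE : EL (q i) ℓ.1 = 0
      · rw [hE, pow_zero]
        simp [eps]
      · obtain ⟨hlp, hl2⟩ := hP' ℓ.1 ℓ.2
        have hdvd : ℓ.1 ∣ (q i).natAbs := by
          by_contra hnd
          exact hE (Nat.factorization_eq_zero_of_not_dvd hnd)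
        have hℓP : ℓ.1 ∈ P := hmemP ℓ.1 hlp hl2
          ((Int.dvd_natAbs.mp (Int.natCast_dvd_natCast.mpr hdvd)).trans
            (Finset.dvd_prod_of_mem q (Finset.mem_univ i)))
        have hdvdv : ((ℓ.1 : ℕ) : ℤ) ∣ (v : ℤ) := by
          rw [hvZ]
          exact Dvd.dvd.mul_left (Finset.dvd_prod_of_mem _ hℓP) 16
        have hpy : (p : ℤ) ≡ y ℓ.1 [ZMOD ((ℓ.1 : ℕ) : ℤ)] :=
          (hmodv.of_dvd hdvdv).trans (hUy ℓ.1 ℓ.2)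
        obtain ⟨hyJ, -, -⟩ := hyP ℓ.1 ℓ.2
        have hJval : J((p : ℤ) | ℓ.1) = eps (t (some (some ℓ))) := by
          rw [jacobiSym.mod_left' hpy]
          exact hyJ
        rw [hJval, eps_pow]
    rw [jacobiSym.legendreSym.to_jacobiSym,
      lemA P' hP' p hpodd (q i).natAbs (q i) rfl (hq i) (hfacq i), hχ₄p, hχ₈p,
      ← Finset.prod_coe_sort P' (fun ℓ => J((p : ℤ) | ℓ) ^ EL (q i) ℓ)]
    have hprodrw : ∏ ℓ : {x // x ∈ P'}, J((p : ℤ) | ℓ.1) ^ EL (q i) ℓ.1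
        = ∏ ℓ : {x // x ∈ P'}, eps (((EL (q i) ℓ.1 : ℕ) : ZMod 2) * t (some (some ℓ))) :=
      Finset.prod_congr rfl fun ℓ _ => hJp ℓ
    rw [hprodrw, ← eps_sum, eps_pow, eps_pow, ← eps_add, ← eps_add]
    have hX : ((E0 P' (q i) : ℕ) : ZMod 2) * t none + (((E2 (q i) : ℕ) : ZMod 2) * t (some none)
        + ∑ ℓ : {x // x ∈ P'}, ((EL (q i) ℓ.1 : ℕ) : ZMod 2) * t (some (some ℓ))) = 1 := by
      have hfin := ht (some i)
      rw [Fintype.sum_option, Fintype.sum_option] at hfin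
      exact hfin
    rw [add_assoc, hX]
    decide
  · -- the largest power of 2 dividing U - 1
    have hUx : (16 : ℤ) ∣ (U - 1) - ((x16 : ℤ) - 1) := by
      obtain ⟨k, hk⟩ := Int.ModEq.dvd hU16
      exact ⟨-k, by linarith⟩
    have hT16' : T ∣ (16 : ℤ) := (dvd_mul_left T 2).trans hT16
    have hTU : T ∣ U - 1 := by
      obtain ⟨a, ha⟩ := hT16'.trans hUx
      obtain ⟨b, hb⟩ := hTdvd
      exact ⟨a + b, by linarith⟩
    have hTU2 : ¬2 * T ∣ U - 1 := by
      intro h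
      obtain ⟨a, ha⟩ := h
      obtain ⟨b, hb⟩ := hT16.trans hUx
      exact hTndvd ⟨a - b, by linarith⟩
    refine ⟨T, hTval, hTU, hTU2, ?_⟩
    have hwT : T * ((U - 1) / T) = U - 1 := Int.mul_ediv_cancel' hTU
    refine hcopv _ ?_ ?_
    · intro h2w
      obtain ⟨a, ha⟩ := h2w
      exact hTU2 ⟨a, by rw [← hwT, ha]; ring⟩
    · intro ℓ hℓ hdl
      have hdU : (ℓ : ℤ) ∣ U - 1 := hdl.trans ⟨T, by rw [mul_comm]; exact hwT.symm⟩
      have h1 : U ≡ 1 [ZMOD (ℓ : ℤ)] := by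
        refine Int.modEq_iff_dvd.mpr ?_
        obtain ⟨c, hc⟩ := hdU
        exact ⟨-c, by linarith⟩
      obtain ⟨-, -, hy1⟩ := hyP ℓ (Finset.mem_insert_of_mem hℓ)
      exact hy1 ((hUy ℓ (Finset.mem_insert_of_mem hℓ)).symm.trans h1)
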